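/- Let J ⊆ S = K[x_0,...,x_n] (char K = 0, K algebraically closed) be an ideal extremal with respect to a term order >, with m the largest degree of a minimal generator and r = dim_K J_m. Let V ⊆ S_m be an r-dimensional subspace such that the point [V] of the Grassmannian Grass(r, S_m) lies in the standard affine open chart centered at [J_m] (i.e., the Plücker coordinate corresponding to the monomial basis of J_m is nonzero on V). Let I = (V). Then dim_K I_{m+1} = dim_K J_{m+1} if and only if dim_K I_z = dim_K J_z for all z ≥ m. -/

import Mathlib

open MvPolynomial Finsupp

/-- `I` is a monomial ideal: generated by monomials. -/
def IsMonomialIdeal {n : ℕ} {K : Type*} [Field K]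
    (I : Ideal (MvPolynomial (Fin (n + 1)) K)) : Prop :=
  ∃ S : Set (Fin (n + 1) →₀ ℕ),
    I = Ideal.span ((fun A => MvPolynomial.monomial A (1 : K)) '' S)

/-- The Borel-fixed condition. -/
def BorelFixed {n : ℕ} {K : Type*} [Field K]
    (I : Ideal (MvPolynomial (Fin (n + 1)) K)) : Prop :=
  IsMonomialIdeal I ∧
    ∀ (A : Fin (n + 1) →₀ ℕ) (i : Fin n),
      MvPolynomial.monomial (A + Finsupp.single i.succ 1) (1 : K) ∈ I →
      MvPolynomial.monomial (A + Finsupp.single i.castSucc 1) (1 : K) ∈ I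

/-- `x^A` is a minimal monomial generator of the monomial ideal `I`. -/
def MinGen {n : ℕ} {K : Type*} [Field K]
    (I : Ideal (MvPolynomial (Fin (n + 1)) K)) (A : Fin (n + 1) →₀ ℕ) : Prop :=
  MvPolynomial.monomial A (1 : K) ∈ I ∧
    ∀ i : Fin (n + 1), A i ≠ 0 →
      MvPolynomial.monomial (A - Finsupp.single i 1) (1 : K) ∉ I

/-- `gt` is a term order on exponent vectors. -/
def IsTermOrder {n : ℕ} (gt : (Fin (n + 1) →₀ ℕ) → (Fin (n + 1) →₀ ℕ) → Prop) : Prop :=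
  (∀ A B C, gt A B → gt B C → gt A C) ∧
  (∀ A B, A ≠ B → gt A B ∨ gt B A) ∧
  (∀ A, ¬ gt A A) ∧
  (∀ A B C, gt A B → gt (A + C) (B + C)) ∧
  (∀ A, A ≠ 0 → gt A 0)

/-- The dimension over `K` of the degree-`d` graded piece of an ideal
`I ⊆ K[x_0,…,x_n]`. -/
noncomputable def hilb {n : ℕ} {K : Type*} [Field K]
    (I : Ideal (MvPolynomial (Fin (n + 1)) K)) (d : ℕ) : ℕ :=
  Module.finrank K
    ↥(Submodule.restrictScalars K I ⊓
        MvPolynomial.homogeneousSubmodule (Fin (n + 1)) K d)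

namespace LG

variable {n : ℕ} {K : Type*} [Field K]

abbrev Exp (n : ℕ) := Fin (n + 1) →₀ ℕ

lemma degree_add (a b : Exp n) : (a + b).degree = a.degree + b.degree := by
  classical
  show (a + b).sum (fun _ e => e) = a.sum (fun _ e => e) + b.sum (fun _ e => e)
  exact Finsupp.sum_add_index' (fun _ => rfl) (fun _ _ _ => rfl)

lemma degree_single (i : Fin (n+1)) (k : ℕ) : (Finsupp.single i k).degree = k := by
  classical
  show (Finsupp.single i k).sum (fun _ e => e) = k
  exact Finsupp.sum_single_index rfl

/-- the set of exponents of a given degree is finite -/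
lemma finite_degree_eq (z : ℕ) : Set.Finite {A : Exp n | A.degree = z} := by
  apply Set.Finite.subset
    (Set.finite_range fun g : Fin (n+1) → Fin (z+1) =>
      Finsupp.equivFunOnFinite.symm fun i => ((g i : ℕ)))
  intro A hA
  refine ⟨fun i => ⟨A i, ?_⟩, ?_⟩
  · have h1 := Finsupp.le_degree i A
    have h2 : A.degree = z := hA
    omega
  · ext j; simp

noncomputable def ExpsF (n z : ℕ) : Finset (Exp n) := (finite_degree_eq (n := n) z).toFinset

lemma mem_ExpsF {z : ℕ} {A : Exp n} : A ∈ ExpsF n z ↔ A.degree = z := by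
  simp [ExpsF]


structure Ctx (n : ℕ) (K : Type*) [Field K] where
  J : Ideal (MvPolynomial (Fin (n+1)) K)
  gt : Exp n → Exp n → Prop
  m : ℕ
  F : Finset (Exp n)
  R : Finset (Exp n)
  c : Exp n → Exp n → K
  hBorel : BorelFixed J
  hgt : IsTermOrder gt
  hm : ∀ A, MinGen J A → A.degree ≤ m
  hext : ∀ A B : Exp n, A.degree = m → B.degree = m →
    monomial A (1:K) ∈ J → monomial B (1:K) ∉ J → gt A B
  hF : ∀ A, A ∈ F ↔ (A.degree = m ∧ monomial A (1:K) ∈ J)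
  hR : ∀ B, B ∈ R ↔ (B.degree = m ∧ monomial B (1:K) ∉ J)

namespace Ctx

variable {n : ℕ} {K : Type*} [Field K] (S : Ctx n K)

/-! ### generic gt facts -/

lemma gt_trans {a b c : Exp n} (h1 : S.gt a b) (h2 : S.gt b c) : S.gt a c :=
  S.hgt.1 a b c h1 h2

lemma gt_total {a b : Exp n} (h : a ≠ b) : S.gt a b ∨ S.gt b a := S.hgt.2.1 a b h

lemma gt_irrefl (a : Exp n) : ¬ S.gt a a := S.hgt.2.2.1 a

lemma gt_add {a b : Exp n} (cc : Exp n) (h : S.gt a b) : S.gt (a + cc) (b + cc) :=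
  S.hgt.2.2.2.1 a b cc h

open scoped Classical in
/-- the measure of an exponent: number of degree-`z` exponents strictly below it. -/
noncomputable def meas (z : ℕ) (μ : Exp n) : ℕ :=
  ((ExpsF n z).filter (fun ν => S.gt μ ν)).card

lemma meas_lt {z : ℕ} {μ ν : Exp n} (hν : ν.degree = z) (h : S.gt μ ν) :
    S.meas z ν < S.meas z μ := by
  classical
  unfold meas
  apply Finset.card_lt_card
  constructor
  · intro ρ hρ
    simp only [Finset.mem_filter] at hρ ⊢
    exact ⟨hρ.1, S.gt_trans h hρ.2⟩
  · intro hsub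
    have : ν ∈ (ExpsF n z).filter (fun ρ => S.gt μ ρ) := by
      simp only [Finset.mem_filter, mem_ExpsF]; exact ⟨hν, h⟩
    have := hsub this
    simp only [Finset.mem_filter] at this
    exact S.gt_irrefl ν this.2

lemma meas_inj {z : ℕ} {μ ν : Exp n} (hμ : μ.degree = z) (hν : ν.degree = z)
    (h : μ ≠ ν) : S.meas z μ ≠ S.meas z ν := by
  rcases S.gt_total h with h' | h'
  · exact fun e => absurd e (Nat.ne_of_gt (S.meas_lt hν h'))
  · exact fun e => absurd e (Nat.ne_of_lt (S.meas_lt hμ h'))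

/-! ### monomial ideal facts -/

lemma monomial_mem_of_mem {p : MvPolynomial (Fin (n+1)) K} (hp : p ∈ S.J) :
    ∀ d ∈ p.support, monomial d (1:K) ∈ S.J := by
  classical
  obtain ⟨T, hT⟩ := S.hBorel.1
  rw [hT] at hp
  rw [Ideal.span] at hp
  induction hp using Submodule.span_induction with
  | mem x hx =>
    obtain ⟨A, hA, rfl⟩ := hx
    intro d hd
    rw [MvPolynomial.support_monomial] at hd
    simp only [if_neg (one_ne_zero (α := K)), Finset.mem_singleton] at hd
    subst hd
    rw [hT]
    exact Ideal.subset_span ⟨_, hA, rfl⟩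
  | zero => intro d hd; simp at hd
  | add x y hx hy ihx ihy =>
    intro d hd
    have hd2 := MvPolynomial.support_add (p := x) (q := y) hd
    rcases Finset.mem_union.1 hd2 with h | h
    · exact ihx d h
    · exact ihy d h
  | smul a x hx ih =>
    intro d hd
    have hsub := MvPolynomial.support_mul a x
    have hd' := hsub (by simpa [smul_eq_mul] using hd)
    rw [Finset.mem_add] at hd'
    obtain ⟨d1, hd1, d2, hd2, rfl⟩ := hd'
    have : monomial (d1 + d2) (1:K) = monomial d1 (1:K) * monomial d2 (1:K) := by
      rw [monomial_mul, one_mul]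
    rw [this]
    exact Ideal.mul_mem_left _ _ (ih d2 hd2)

lemma monomial_mem_add {A : Exp n} (E : Exp n) (hA : monomial A (1:K) ∈ S.J) :
    monomial (E + A) (1:K) ∈ S.J := by
  have : monomial (E + A) (1:K) = monomial E (1:K) * monomial A (1:K) := by
    rw [monomial_mul, one_mul]
  rw [this]
  exact Ideal.mul_mem_left _ _ hA

/-! ### Borel exchange -/

lemma borel_step {A : Exp n} {k : Fin (n+1)} (hk : (k : ℕ) ≠ 0)
    (h : monomial (A + Finsupp.single k 1) (1:K) ∈ S.J) :
    monomial (A + Finsupp.single (⟨(k:ℕ)-1, by omega⟩ : Fin (n+1)) 1) (1:K) ∈ S.J := by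
  have hklt : (k : ℕ) - 1 < n := by omega
  set j : Fin n := ⟨(k:ℕ)-1, hklt⟩ with hj
  have h1 : j.succ = k := by
    apply Fin.ext; simp [hj]; omega
  have h2 : j.castSucc = (⟨(k:ℕ)-1, by omega⟩ : Fin (n+1)) := by
    apply Fin.ext; simp [hj]
  have := S.hBorel.2 A j (by rw [h1]; exact h)
  rwa [h2] at this

lemma borel_move {A : Exp n} {i k : Fin (n+1)} (hik : i ≤ k)
    (h : monomial (A + Finsupp.single k 1) (1:K) ∈ S.J) :
    monomial (A + Finsupp.single i 1) (1:K) ∈ S.J := by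
  obtain ⟨d, hd⟩ : ∃ d, (k:ℕ) = (i:ℕ) + d := ⟨(k:ℕ) - (i:ℕ), by omega⟩
  induction d generalizing k with
  | zero =>
    have : k = i := by apply Fin.ext; omega
    subst this; exact h
  | succ d ih =>
    have hk0 : (k:ℕ) ≠ 0 := by omega
    have hstep := S.borel_step hk0 h
    exact ih (by simp [Fin.le_def]; omega) hstep (by simp; omega)


/-! ### minimal generators and division -/

lemma sub_single_add {C : Exp n} {i : Fin (n+1)} (h : C i ≠ 0) :
    (C - Finsupp.single i 1) + Finsupp.single i 1 = C := by
  ext j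
  rcases eq_or_ne j i with rfl | hj
  · simp [Finsupp.single_apply, Nat.sub_add_cancel (Nat.one_le_iff_ne_zero.2 h)]
  · simp [Finsupp.single_apply, Ne.symm hj]

lemma exists_minGen_le {C : Exp n} (hC : monomial C (1:K) ∈ S.J) :
    ∃ G, MinGen S.J G ∧ G ≤ C := by
  classical
  generalize hz : C.degree = z
  induction z using Nat.strong_induction_on generalizing C with
  | _ z ih =>
  by_cases hMG : MinGen S.J C
  · exact ⟨C, hMG, le_refl C⟩
  · have : ∃ i, C i ≠ 0 ∧ monomial (C - Finsupp.single i 1) (1:K) ∈ S.J := by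
      unfold MinGen at hMG
      push_neg at hMG
      exact hMG hC
    obtain ⟨i, hi, hmem⟩ := this
    have hdeg : (C - Finsupp.single i 1).degree + 1 = C.degree := by
      conv_rhs => rw [← sub_single_add (C := C) hi]
      rw [degree_add, degree_single]
    obtain ⟨G, hG, hle⟩ := ih ((C - Finsupp.single i 1).degree) (by omega) hmem rfl
    exact ⟨G, hG, le_trans hle tsub_le_self⟩

lemma exists_lt_coord {G C : Exp n} (hle : G ≤ C) (hdeg : G.degree < C.degree) :
    ∃ i, G i < C i := by
  by_contra hcon
  push_neg at hcon
  have : G = C := by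
    ext i
    exact le_antisymm (Finsupp.le_def.1 hle i) (hcon i)
  rw [this] at hdeg
  omega

lemma pad_to_F {C : Exp n} (hdC : S.m ≤ C.degree) :
    ∀ (t : ℕ) (G : Exp n), monomial G (1:K) ∈ S.J → G ≤ C → G.degree + t = S.m →
    ∃ A ∈ S.F, A ≤ C := by
  intro t
  induction t with
  | zero =>
    intro G hmem hle hdeg
    exact ⟨G, (S.hF G).2 ⟨by omega, hmem⟩, hle⟩
  | succ t ih =>
    intro G hmem hle hdeg
    obtain ⟨i, hi⟩ := exists_lt_coord hle (by omega)
    refine ih (G + Finsupp.single i 1) ?_ ?_ ?_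
    · have := S.monomial_mem_add (Finsupp.single i 1) hmem
      rwa [add_comm (Finsupp.single i 1) G] at this
    · rw [Finsupp.le_def]
      intro j
      rcases eq_or_ne j i with rfl | hj
      · simp [Finsupp.single_apply]; omega
      · simp [Finsupp.single_apply, Ne.symm hj]
        exact Finsupp.le_def.1 hle j
    · rw [degree_add, degree_single]; omega

lemma exists_F_le {C : Exp n} (hC : monomial C (1:K) ∈ S.J) (hdC : S.m ≤ C.degree) :
    ∃ A ∈ S.F, A ≤ C := by
  classical
  obtain ⟨G, hG, hle⟩ := S.exists_minGen_le hC
  have hGd : G.degree ≤ S.m := S.hm G hG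
  exact S.pad_to_F hdC (S.m - G.degree) G hG.1 hle (by omega)


/-! ### the generators -/

noncomputable def fpoly (A : Exp n) : MvPolynomial (Fin (n+1)) K :=
  monomial A (1:K) + ∑ B ∈ S.R, S.c A B • monomial B (1:K)

noncomputable def gen (p : Exp n × Exp n) : MvPolynomial (Fin (n+1)) K :=
  monomial p.2 (1:K) * S.fpoly p.1

noncomputable def lead (p : Exp n × Exp n) : Exp n := p.1 + p.2

def Pairs (z : ℕ) : Set (Exp n × Exp n) :=
  {p | p.1 ∈ S.F ∧ p.2.degree + S.m = z}

def Std (q : MvPolynomial (Fin (n+1)) K) : Prop :=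
  ∀ d ∈ q.support, monomial d (1:K) ∉ S.J

noncomputable def SpanExp (z : ℕ) : Submodule K (MvPolynomial (Fin (n+1)) K) :=
  Submodule.span K (S.gen '' S.Pairs z)

lemma F_disj_R {A : Exp n} (hA : A ∈ S.F) : A ∉ S.R := by
  intro hA'
  exact ((S.hR A).1 hA').2 ((S.hF A).1 hA).2

lemma gen_eq (p : Exp n × Exp n) :
    S.gen p = monomial (lead p) (1:K) +
      ∑ B ∈ S.R, S.c p.1 B • monomial (p.2 + B) (1:K) := by
  unfold gen fpoly lead
  rw [mul_add, Finset.mul_sum]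
  congr 1
  · rw [monomial_mul, one_mul]
    exact congrArg (fun d => (monomial d) (1:K)) (add_comm p.2 p.1)
  · apply Finset.sum_congr rfl
    intro B _
    rw [Algebra.mul_smul_comm, monomial_mul, one_mul]

lemma coeff_gen_lead {p : Exp n × Exp n} (hp : p.1 ∈ S.F) :
    coeff (lead p) (S.gen p) = 1 := by
  classical
  rw [gen_eq]
  rw [coeff_add, coeff_monomial, if_pos rfl]
  rw [MvPolynomial.coeff_sum]
  have : ∀ B ∈ S.R, coeff (lead p) (S.c p.1 B • monomial (p.2 + B) (1:K)) = 0 := by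
    intro B hB
    rw [MvPolynomial.coeff_smul, coeff_monomial]
    rw [if_neg, smul_zero]
    intro he
    have : B = p.1 := by
      have : B + p.2 = p.1 + p.2 := by rw [add_comm p.2 B] at he; exact he
      exact add_right_cancel this
    exact S.F_disj_R hp (this ▸ hB)
  rw [Finset.sum_eq_zero this, add_zero]

lemma support_gen_subset (p : Exp n × Exp n) :
    (S.gen p).support ⊆ insert (lead p) (S.R.image (fun B => p.2 + B)) := by
  classical
  rw [gen_eq]
  intro d hd
  have h1 := MvPolynomial.support_add hd
  rcases Finset.mem_union.1 h1 with h | h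
  · rw [MvPolynomial.support_monomial] at h
    simp only [if_neg (one_ne_zero (α := K)), Finset.mem_singleton] at h
    subst h; exact Finset.mem_insert_self _ _
  · apply Finset.mem_insert_of_mem
    rw [MvPolynomial.mem_support_iff, MvPolynomial.coeff_sum] at h
    obtain ⟨B, hB, hne⟩ := Finset.exists_ne_zero_of_sum_ne_zero h
    rw [MvPolynomial.coeff_smul, coeff_monomial] at hne
    by_cases he : p.2 + B = d
    · exact Finset.mem_image.2 ⟨B, hB, he⟩
    · rw [if_neg he, smul_zero] at hne; exact absurd rfl hne

lemma gt_lead_of_mem_support {p : Exp n × Exp n} (hp : p.1 ∈ S.F) {d : Exp n}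
    (hd : d ∈ (S.gen p).support) : d = lead p ∨ S.gt (lead p) d := by
  classical
  rcases Finset.mem_insert.1 (S.support_gen_subset p hd) with h | h
  · exact Or.inl h
  · right
    obtain ⟨B, hB, rfl⟩ := Finset.mem_image.1 h
    have hgt : S.gt p.1 B := by
      apply S.hext _ _ ((S.hF _).1 hp).1 ((S.hR _).1 hB).1 ((S.hF _).1 hp).2 ((S.hR _).1 hB).2
    have := S.gt_add p.2 hgt
    rw [add_comm B p.2] at this
    exact this

lemma degree_of_mem_support_gen {z : ℕ} {p : Exp n × Exp n} (hp : p ∈ S.Pairs z) {d : Exp n}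
    (hd : d ∈ (S.gen p).support) : d.degree = z := by
  classical
  rcases Finset.mem_insert.1 (S.support_gen_subset p hd) with h | h
  · subst h
    unfold lead
    rw [degree_add, ((S.hF _).1 hp.1).1]
    have := hp.2; omega
  · obtain ⟨B, hB, rfl⟩ := Finset.mem_image.1 h
    rw [degree_add, ((S.hR _).1 hB).1]
    have := hp.2; omega

lemma lead_degree {z : ℕ} {p : Exp n × Exp n} (hp : p ∈ S.Pairs z) :
    (lead p).degree = z := by
  unfold lead
  rw [degree_add, ((S.hF _).1 hp.1).1]
  have := hp.2; omega

lemma lead_mem_J {p : Exp n × Exp n} (hp : p.1 ∈ S.F) :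
    monomial (lead p) (1:K) ∈ S.J := by
  have h2 := S.monomial_mem_add p.2 ((S.hF _).1 hp).2
  show monomial (p.1 + p.2) (1:K) ∈ S.J
  have h3 : (monomial (p.2 + p.1)) (1:K) = (monomial (p.1 + p.2)) (1:K) :=
    congrArg (fun d => (monomial d) (1:K)) (add_comm p.2 p.1)
  rwa [h3] at h2


/-! ### graded pieces of the ideal -/

lemma gen_mem_homog {z : ℕ} {p : Exp n × Exp n} (hp : p ∈ S.Pairs z) :
    S.gen p ∈ MvPolynomial.homogeneousSubmodule (Fin (n+1)) K z := by
  rw [gen_eq]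
  refine Submodule.add_mem _ ?_ (Submodule.sum_mem _ ?_)
  · exact (mem_homogeneousSubmodule _ _).2 (isHomogeneous_monomial _ (S.lead_degree hp))
  · intro B hB
    refine Submodule.smul_mem _ _ ((mem_homogeneousSubmodule _ _).2
      (isHomogeneous_monomial _ ?_))
    rw [degree_add, ((S.hR _).1 hB).1]
    have := hp.2; omega

lemma gen_isHomogeneous {z : ℕ} {p : Exp n × Exp n} (hp : p ∈ S.Pairs z) :
    (S.gen p).IsHomogeneous z :=
  (mem_homogeneousSubmodule _ _).1 (S.gen_mem_homog hp)

lemma spanExp_le_homog (z : ℕ) :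
    S.SpanExp z ≤ MvPolynomial.homogeneousSubmodule (Fin (n+1)) K z := by
  apply Submodule.span_le.2
  rintro g ⟨p, hp, rfl⟩
  exact (mem_homogeneousSubmodule _ _).2 (S.gen_isHomogeneous hp)

noncomputable def Idl : Ideal (MvPolynomial (Fin (n+1)) K) :=
  Ideal.span (S.fpoly '' ↑S.F)

lemma gen_mem_Idl {z : ℕ} {p : Exp n × Exp n} (hp : p ∈ S.Pairs z) : S.gen p ∈ S.Idl := by
  apply Ideal.mul_mem_left
  exact Ideal.subset_span ⟨p.1, hp.1, rfl⟩

lemma hcomp_mul_mem {z : ℕ} (q : MvPolynomial (Fin (n+1)) K) {A : Exp n} (hA : A ∈ S.F) :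
    (homogeneousComponent z) (q * S.fpoly A) ∈ S.SpanExp z := by
  classical
  nth_rewrite 1 [MvPolynomial.as_sum q]
  rw [Finset.sum_mul, map_sum]
  apply Submodule.sum_mem
  intro E hE
  have hmon : monomial E (coeff E q) * S.fpoly A = (coeff E q) • S.gen (A, E) := by
    unfold gen
    rw [← smul_mul_assoc]
    congr 1
    rw [MvPolynomial.smul_monomial, smul_eq_mul, mul_one]
  rw [hmon]
  have hhom : ((coeff E q) • S.gen (A, E)) ∈
      MvPolynomial.homogeneousSubmodule (Fin (n+1)) K (E.degree + S.m) := by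
    apply Submodule.smul_mem
    rw [mem_homogeneousSubmodule]
    apply S.gen_isHomogeneous (z := E.degree + S.m)
    exact ⟨hA, rfl⟩
  rw [homogeneousComponent_of_mem hhom]
  by_cases hz : z = E.degree + S.m
  · rw [if_pos hz]
    apply Submodule.smul_mem
    apply Submodule.subset_span
    exact ⟨(A, E), ⟨hA, hz.symm⟩, rfl⟩
  · rw [if_neg hz]; exact Submodule.zero_mem _

lemma graded_piece_eq (z : ℕ) :
    Submodule.restrictScalars K S.Idl ⊓
      MvPolynomial.homogeneousSubmodule (Fin (n+1)) K z = S.SpanExp z := by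
  classical
  apply le_antisymm
  · rintro q ⟨hq1, hq2⟩
    replace hq1 : q ∈ Submodule.span (MvPolynomial (Fin (n+1)) K) (S.fpoly '' ↑S.F) := hq1
    obtain ⟨l, hl, rfl⟩ := Submodule.mem_span_set.1 hq1
    have : (homogeneousComponent z) (l.sum fun mi r => r • mi) ∈ S.SpanExp z := by
      rw [Finsupp.sum, map_sum]
      apply Submodule.sum_mem
      intro g hg
      obtain ⟨A, hA, rfl⟩ := hl hg
      rw [smul_eq_mul]
      exact S.hcomp_mul_mem _ hA
    rwa [homogeneousComponent_of_mem hq2, if_pos rfl] at this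
  · apply Submodule.span_le.2
    rintro g ⟨p, hp, rfl⟩
    exact ⟨S.gen_mem_Idl hp, S.gen_mem_homog hp⟩


/-! ### linear algebra in a fixed degree -/

lemma degree_eq_of_isHomogeneous {z : ℕ} {q : MvPolynomial (Fin (n+1)) K}
    (hq : q.IsHomogeneous z) {d : Exp n} (hd : d ∈ q.support) : d.degree = z := by
  rw [Finsupp.degree_eq_weight_one]
  exact hq (MvPolynomial.mem_support_iff.1 hd)

lemma homog_le_span (z : ℕ) :
    MvPolynomial.homogeneousSubmodule (Fin (n+1)) K z ≤
      Submodule.span K ((fun d => monomial d (1:K)) '' ↑(ExpsF n z)) := by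
  intro q hq
  rw [mem_homogeneousSubmodule] at hq
  nth_rewrite 1 [MvPolynomial.as_sum q]
  apply Submodule.sum_mem
  intro d hd
  have : monomial d (coeff d q) = (coeff d q) • monomial d (1:K) := by
    rw [MvPolynomial.smul_monomial, smul_eq_mul, mul_one]
  rw [this]
  exact Submodule.smul_mem _ _ (Submodule.subset_span
    ⟨d, by rw [Finset.mem_coe, mem_ExpsF]; exact degree_eq_of_isHomogeneous hq hd, rfl⟩)

set_option maxHeartbeats 1000000 in
instance homog_fd (z : ℕ) :
    FiniteDimensional K ↥(MvPolynomial.homogeneousSubmodule (Fin (n+1)) K z) := by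
  haveI : FiniteDimensional K
      ↥(Submodule.span K ((fun (d : Exp n) => monomial d (1:K)) '' ↑(ExpsF n z))) :=
    FiniteDimensional.span_of_finite K
      (Set.Finite.image (fun d => monomial d (1:K)) (Finset.finite_toSet (ExpsF n z)))
  exact Submodule.finiteDimensional_of_le (homog_le_span z)

noncomputable def FJ (z : ℕ) : Finset (Exp n) :=
  Set.Finite.toFinset
    (show Set.Finite {d : Exp n | d.degree = z ∧ monomial d (1:K) ∈ S.J} from
      (finite_degree_eq z).subset (fun d hd => hd.1))

lemma mem_FJ {z : ℕ} {d : Exp n} :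
    d ∈ S.FJ z ↔ (d.degree = z ∧ monomial d (1:K) ∈ S.J) := by
  unfold FJ
  rw [Set.Finite.mem_toFinset]
  rfl

/-- the degree-z part of `J` is spanned by the monomials of `J` of degree `z`. -/
lemma J_graded_eq (z : ℕ) :
    Submodule.restrictScalars K S.J ⊓
      MvPolynomial.homogeneousSubmodule (Fin (n+1)) K z =
    Submodule.span K ((fun d => monomial d (1:K)) '' ↑(S.FJ z)) := by
  classical
  apply le_antisymm
  · intro q hq
    rw [Submodule.mem_inf] at hq
    obtain ⟨hq1, hq2⟩ := hq
    replace hq1 : q ∈ S.J := hq1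
    rw [mem_homogeneousSubmodule] at hq2
    nth_rewrite 1 [MvPolynomial.as_sum q]
    apply Submodule.sum_mem
    intro d hd
    have hmem : d ∈ S.FJ z := S.mem_FJ.2
      ⟨degree_eq_of_isHomogeneous hq2 hd, S.monomial_mem_of_mem hq1 d hd⟩
    have : monomial d (coeff d q) = (coeff d q) • monomial d (1:K) := by
      rw [MvPolynomial.smul_monomial, smul_eq_mul, mul_one]
    rw [this]
    exact Submodule.smul_mem _ _ (Submodule.subset_span ⟨d, hmem, rfl⟩)
  · apply Submodule.span_le.2
    rintro g ⟨d, hd, rfl⟩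
    rw [Finset.mem_coe] at hd
    have hd' := S.mem_FJ.1 hd
    exact ⟨hd'.2, (mem_homogeneousSubmodule _ _).2 (isHomogeneous_monomial _ hd'.1)⟩

lemma finrank_J_graded (z : ℕ) :
    Module.finrank K ↥(Submodule.restrictScalars K S.J ⊓
      MvPolynomial.homogeneousSubmodule (Fin (n+1)) K z) = (S.FJ z).card := by
  classical
  rw [S.J_graded_eq z]
  have him : ((fun d => monomial d (1:K)) '' ↑(S.FJ z)) =
      Set.range (fun d : ↥(S.FJ z) => monomial (d : Exp n) (1:K)) := by
    ext g
    constructor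
    · rintro ⟨d, hd, rfl⟩; exact ⟨⟨d, hd⟩, rfl⟩
    · rintro ⟨⟨d, hd⟩, rfl⟩; exact ⟨d, hd, rfl⟩
  rw [him]
  rw [finrank_span_eq_card (R := K)]
  · exact Fintype.card_coe _
  · have hli := (MvPolynomial.basisMonomials (Fin (n+1)) K).linearIndependent
    have : (fun d : ↥(S.FJ z) => monomial (d : Exp n) (1:K)) =
        (MvPolynomial.basisMonomials (Fin (n+1)) K) ∘ (fun d : ↥(S.FJ z) => (d : Exp n)) := by
      funext d
      simp [MvPolynomial.coe_basisMonomials]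
    rw [this]
    exact hli.comp _ Subtype.val_injective


lemma triangular_li {z : ℕ} (s : Finset (Exp n)) (w : Exp n → MvPolynomial (Fin (n+1)) K)
    (hcoeff : ∀ d ∈ s, coeff d (w d) ≠ 0)
    (hsupp : ∀ d ∈ s, ∀ e ∈ (w d).support, e = d ∨ S.gt d e)
    (hdeg : ∀ d ∈ s, d.degree = z) :
    LinearIndependent K (fun d : ↥s => w (d : Exp n)) := by
  classical
  rw [linearIndependent_iff]
  intro l hl
  by_contra hlne
  have hne : l.support.Nonempty := Finsupp.support_nonempty_iff.2 hlne
  have htne : (l.support.image (fun d : ↥s => (d : Exp n))).Nonempty := hne.image _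
  obtain ⟨μ, hμt, hμmax⟩ := Finset.exists_max_image _ (S.meas z) htne
  obtain ⟨d0, hd0, hd0v⟩ := Finset.mem_image.1 hμt
  have hgtμ : ∀ ν ∈ l.support.image (fun d : ↥s => (d : Exp n)), ν ≠ μ → S.gt μ ν := by
    intro ν hν hνμ
    rcases S.gt_total hνμ with h | h
    · exfalso
      obtain ⟨dν, hdν, rfl⟩ := Finset.mem_image.1 hν
      have := S.meas_lt (hdeg μ (by rw [← hd0v]; exact d0.2)) h
      have h2 := hμmax _ hν
      omega
    · exact h
  have hz0 : coeff μ (Finsupp.linearCombination K (fun d : ↥s => w (d : Exp n)) l) = 0 := by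
    rw [hl]; simp
  rw [Finsupp.linearCombination_apply, Finsupp.sum] at hz0
  rw [MvPolynomial.coeff_sum] at hz0
  have hsingle : ∀ i ∈ l.support, i ≠ d0 → coeff μ (l i • w (i : Exp n)) = 0 := by
    intro i hi hid0
    rw [MvPolynomial.coeff_smul]
    have hcz : coeff μ (w (i : Exp n)) = 0 := by
      by_contra hc
      have hμsupp : μ ∈ (w (i : Exp n)).support := MvPolynomial.mem_support_iff.2 hc
      rcases hsupp (i : Exp n) i.2 μ hμsupp with h | h
      · -- μ = i, but then i = d0? no: i ≠ d0 but both map to μ... i.val = μ = d0.val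
        apply hid0
        apply Subtype.ext
        rw [← h, hd0v]
      · -- gt i μ, but also gt μ i since i ∈ image and i ≠ μ
        have hiμ : (i : Exp n) ≠ μ := fun he => S.gt_irrefl _ (he ▸ h)
        have := hgtμ (i : Exp n) (Finset.mem_image.2 ⟨i, hi, rfl⟩) hiμ
        exact S.gt_irrefl _ (S.gt_trans h this)
    rw [hcz, smul_zero]
  rw [Finset.sum_eq_single d0 hsingle (fun h => absurd hd0 h)] at hz0
  rw [MvPolynomial.coeff_smul, smul_eq_mul, hd0v] at hz0
  have hμs : μ ∈ s := hd0v ▸ d0.2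
  have h2 : l d0 ≠ 0 := Finsupp.mem_support_iff.1 hd0
  exact (mul_ne_zero h2 (hcoeff μ hμs)) hz0

instance spanExp_fd (z : ℕ) : FiniteDimensional K ↥(S.SpanExp z) :=
  Submodule.finiteDimensional_of_le (S.spanExp_le_homog z)

lemma card_le_finrank_spanExp {z : ℕ} (hz : S.m ≤ z) :
    (S.FJ z).card ≤ Module.finrank K ↥(S.SpanExp z) := by
  classical
  have hch : ∀ ν : ↥(S.FJ z), ∃ A, A ∈ S.F ∧ A ≤ (ν : Exp n) := by
    intro ν
    have h := S.mem_FJ.1 ν.2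
    obtain ⟨A, hA1, hA2⟩ := S.exists_F_le h.2 (by omega)
    exact ⟨A, hA1, hA2⟩
  choose Af hAf1 hAf2 using hch
  set w : Exp n → MvPolynomial (Fin (n+1)) K := fun ν =>
    if hν : ν ∈ S.FJ z then S.gen (Af ⟨ν, hν⟩, ν - Af ⟨ν, hν⟩) else 0 with hw
  have hlead : ∀ (ν : Exp n) (hν : ν ∈ S.FJ z),
      lead (Af ⟨ν, hν⟩, ν - Af ⟨ν, hν⟩) = ν := by
    intro ν hν
    exact add_tsub_cancel_of_le (hAf2 ⟨ν, hν⟩)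
  have hpair : ∀ (ν : Exp n) (hν : ν ∈ S.FJ z),
      ((Af ⟨ν, hν⟩, ν - Af ⟨ν, hν⟩) : Exp n × Exp n) ∈ S.Pairs z := by
    intro ν hν
    refine ⟨hAf1 ⟨ν, hν⟩, ?_⟩
    have h1 : Af ⟨ν, hν⟩ + (ν - Af ⟨ν, hν⟩) = ν := hlead ν hν
    have h4 := congrArg Finsupp.degree h1
    rw [degree_add] at h4
    have h2 : (Af ⟨ν, hν⟩).degree = S.m := ((S.hF _).1 (hAf1 ⟨ν, hν⟩)).1
    have h3 : ν.degree = z := (S.mem_FJ.1 hν).1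
    show (ν - Af ⟨ν, hν⟩).degree + S.m = z
    omega
  have hli : LinearIndependent K (fun d : ↥(S.FJ z) => w (d : Exp n)) := by
    apply S.triangular_li (z := z)
    · intro d hd
      rw [hw]; simp only [dif_pos hd]
      have := S.coeff_gen_lead (p := (Af ⟨d, hd⟩, d - Af ⟨d, hd⟩)) (hAf1 _)
      rw [hlead d hd] at this
      rw [this]; exact one_ne_zero
    · intro d hd e he
      rw [hw] at he; simp only [dif_pos hd] at he
      have := S.gt_lead_of_mem_support (p := (Af ⟨d, hd⟩, d - Af ⟨d, hd⟩)) (hAf1 _) he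
      rwa [hlead d hd] at this
    · intro d hd
      exact (S.mem_FJ.1 hd).1
  have hrange : Submodule.span K (Set.range (fun d : ↥(S.FJ z) => w (d : Exp n)))
      ≤ S.SpanExp z := by
    rw [Submodule.span_le]
    rintro g ⟨d, rfl⟩
    rw [hw]; simp only [dif_pos d.2]
    exact Submodule.subset_span ⟨_, hpair d d.2, rfl⟩
  calc (S.FJ z).card = Fintype.card ↥(S.FJ z) := (Fintype.card_coe _).symm
    _ = Module.finrank K ↥(Submodule.span K
          (Set.range (fun d : ↥(S.FJ z) => w (d : Exp n)))) := (finrank_span_eq_card hli).symm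
    _ ≤ Module.finrank K ↥(S.SpanExp z) := Submodule.finrank_mono hrange

lemma finrank_spanExp_le_card {z : ℕ}
    (hvan : ∀ q ∈ S.SpanExp z, S.Std q → q = 0) :
    Module.finrank K ↥(S.SpanExp z) ≤ (S.FJ z).card := by
  classical
  set φ : ↥(S.SpanExp z) →ₗ[K] (↥(S.FJ z) → K) :=
    LinearMap.pi (fun d => (MvPolynomial.lcoeff K (d : Exp n)).comp (S.SpanExp z).subtype)
    with hφ
  have hinj : Function.Injective φ := by
    rw [injective_iff_map_eq_zero]
    intro q hq
    have hstd : S.Std (q : MvPolynomial (Fin (n+1)) K) := by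
      intro e he
      intro hemem
      have hdeg : e.degree = z :=
        degree_eq_of_isHomogeneous
          ((mem_homogeneousSubmodule _ _).1 (S.spanExp_le_homog z q.2)) he
      have heFJ : e ∈ S.FJ z := S.mem_FJ.2 ⟨hdeg, hemem⟩
      have := congrFun hq ⟨e, heFJ⟩
      rw [hφ] at this
      simp only [LinearMap.pi_apply, LinearMap.comp_apply, Submodule.subtype_apply,
        MvPolynomial.lcoeff_apply, Pi.zero_apply] at this
      exact (MvPolynomial.mem_support_iff.1 he) this
    have := hvan (q : MvPolynomial (Fin (n+1)) K) q.2 hstd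
    exact Subtype.ext this
  calc Module.finrank K ↥(S.SpanExp z)
      ≤ Module.finrank K (↥(S.FJ z) → K) := LinearMap.finrank_le_finrank_of_injective hinj
    _ = Fintype.card ↥(S.FJ z) := Module.finrank_pi K
    _ = (S.FJ z).card := Fintype.card_coe _


/-! ### the division algorithm within a degree -/

lemma coeff_gen_zero_of_gt {μ : Exp n} {p : Exp n × Exp n} (hp : p.1 ∈ S.F)
    (hgt : S.gt μ (lead p)) : coeff μ (S.gen p) = 0 := by
  by_contra hc
  rcases S.gt_lead_of_mem_support hp (MvPolynomial.mem_support_iff.2 hc) with h | h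
  · exact S.gt_irrefl _ (h ▸ hgt)
  · exact S.gt_irrefl _ (S.gt_trans hgt h)

/-- one reduction step -/
lemma div_step {z : ℕ} (hz : S.m ≤ z) (q : MvPolynomial (Fin (n+1)) K)
    (hqhom : q.IsHomogeneous z)
    (hJ : ∃ d ∈ q.support, monomial d (1:K) ∈ S.J) :
    ∃ (ν : Exp n) (p : Exp n × Exp n),
      ν ∈ q.support ∧ monomial ν (1:K) ∈ S.J ∧ p ∈ S.Pairs z ∧ lead p = ν ∧
      ((q - (coeff ν q) • S.gen p).IsHomogeneous z ∧
       (∀ d ∈ (q - (coeff ν q) • S.gen p).support, monomial d (1:K) ∈ S.J → S.gt ν d) ∧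
       (∀ d ∈ (q - (coeff ν q) • S.gen p).support, d ∈ q.support ∨ d ∈ (S.gen p).support)) := by
  classical
  set T : Finset (Exp n) := q.support.filter (fun d => monomial d (1:K) ∈ S.J) with hT
  have hTne : T.Nonempty := by
    obtain ⟨d, h1, h2⟩ := hJ
    exact ⟨d, Finset.mem_filter.2 ⟨h1, h2⟩⟩
  obtain ⟨ν, hνT, hνmax⟩ := Finset.exists_max_image T (S.meas z) hTne
  rw [hT, Finset.mem_filter] at hνT
  obtain ⟨hνsupp, hνJ⟩ := hνT
  have hνdeg : ν.degree = z := degree_eq_of_isHomogeneous hqhom hνsupp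
  obtain ⟨A, hAF, hAle⟩ := S.exists_F_le hνJ (by omega)
  set p : Exp n × Exp n := (A, ν - A) with hp
  have hlead : lead p = ν := add_tsub_cancel_of_le hAle
  have hpPairs : p ∈ S.Pairs z := by
    refine ⟨hAF, ?_⟩
    have h4 : A + (ν - A) = ν := add_tsub_cancel_of_le hAle
    have h5 := congrArg Finsupp.degree h4
    rw [degree_add] at h5
    have h2 : A.degree = S.m := ((S.hF _).1 hAF).1
    show (ν - A).degree + S.m = z
    omega
  have hgthm : ∀ d ∈ (S.gen p).support, d = ν ∨ S.gt ν d := by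
    intro d hd
    have := S.gt_lead_of_mem_support hAF hd
    rwa [hlead] at this
  have hcoeffν : coeff ν (S.gen p) = 1 := by
    have := S.coeff_gen_lead (p := p) hAF
    rwa [hlead] at this
  have hq'coeff : coeff ν (q - (coeff ν q) • S.gen p) = 0 := by
    rw [MvPolynomial.coeff_sub, MvPolynomial.coeff_smul, hcoeffν]
    simp
  have hq'supp : ∀ d ∈ (q - (coeff ν q) • S.gen p).support,
      d ∈ q.support ∨ d ∈ (S.gen p).support := by
    intro d hd
    rw [MvPolynomial.mem_support_iff, MvPolynomial.coeff_sub, MvPolynomial.coeff_smul] at hd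
    by_cases h1 : d ∈ q.support
    · exact Or.inl h1
    · right
      rw [MvPolynomial.notMem_support_iff] at h1
      rw [h1] at hd
      rw [MvPolynomial.mem_support_iff]
      intro h2
      rw [h2] at hd
      simp at hd
  refine ⟨ν, p, hνsupp, hνJ, hpPairs, hlead, ?_, ?_, hq'supp⟩
  · intro d hd
    show (Finsupp.weight (fun _ => (1:ℕ))) d = z; rw [← Finsupp.degree_eq_weight_one]
    have hd' : d ∈ (q - (coeff ν q) • S.gen p).support := MvPolynomial.mem_support_iff.2 hd
    rcases hq'supp d hd' with h | h
    · exact degree_eq_of_isHomogeneous hqhom h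
    · exact degree_eq_of_isHomogeneous (S.gen_isHomogeneous hpPairs) h
  · intro d hd hdJ
    have hdν : d ≠ ν := by
      intro he
      rw [he, MvPolynomial.mem_support_iff] at hd
      exact hd hq'coeff
    rcases hq'supp d hd with h | h
    · -- d is a J-monomial of q, so meas d ≤ meas ν; d ≠ ν forces gt ν d
      have hdT : d ∈ T := Finset.mem_filter.2 ⟨h, hdJ⟩
      have hmeasle := hνmax d hdT
      rcases S.gt_total hdν with hgt | hgt
      · exfalso
        have := S.meas_lt hνdeg hgt
        omega
      · exact hgt
    · rcases hgthm d h with h' | h'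
      · exact absurd h' hdν
      · exact h'


/-- full division within a degree -/
lemma div_aux {z : ℕ} (hz : S.m ≤ z) :
    ∀ (N : ℕ) (q : MvPolynomial (Fin (n+1)) K), q.IsHomogeneous z →
    (∀ d ∈ q.support, monomial d (1:K) ∈ S.J → S.meas z d ≤ N) →
    ∃ r, (q - r) ∈ Submodule.span K
        (S.gen '' {p | p ∈ S.Pairs z ∧ S.meas z (lead p) ≤ N})
      ∧ r.IsHomogeneous z ∧ S.Std r := by
  classical
  intro N
  induction N using Nat.strong_induction_on with | _ N IH =>
  intro q hqhom hqbound
  by_cases hJ : ∃ d ∈ q.support, monomial d (1:K) ∈ S.J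
  · obtain ⟨ν, p, hνsupp, hνJ, hpPairs, hlead, hq'hom, hq'J, hq'supp⟩ :=
      S.div_step hz q hqhom hJ
    set q' := q - (coeff ν q) • S.gen p with hq'
    have hmeasν : S.meas z ν ≤ N := hqbound ν hνsupp hνJ
    have hνdeg : ν.degree = z := degree_eq_of_isHomogeneous hqhom hνsupp
    have hgenmem : (coeff ν q) • S.gen p ∈ Submodule.span K
        (S.gen '' {p | p ∈ S.Pairs z ∧ S.meas z (lead p) ≤ N}) := by
      apply Submodule.smul_mem
      apply Submodule.subset_span
      exact ⟨p, ⟨hpPairs, by rw [hlead]; exact hmeasν⟩, rfl⟩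
    by_cases hN : N = 0
    · -- q' has no J-monomials at all
      subst hN
      have hstd : S.Std q' := by
        intro d hd hdJ
        have h1 := hq'J d hd hdJ
        have h2 : d.degree = z := degree_eq_of_isHomogeneous hq'hom hd
        have := S.meas_lt (μ := ν) h2 h1
        omega
      refine ⟨q', ?_, hq'hom, hstd⟩
      have : q - q' = (coeff ν q) • S.gen p := by rw [hq']; ring
      rw [this]
      exact hgenmem
    · have hq'bound : ∀ d ∈ q'.support, monomial d (1:K) ∈ S.J →
          S.meas z d ≤ N - 1 := by
        intro d hd hdJ
        have h1 := hq'J d hd hdJ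
        have h2 : d.degree = z := degree_eq_of_isHomogeneous hq'hom hd
        have := S.meas_lt (μ := ν) h2 h1
        omega
      obtain ⟨r, hr1, hr2, hr3⟩ := IH (N-1) (by omega) q' hq'hom hq'bound
      refine ⟨r, ?_, hr2, hr3⟩
      have hmono : Submodule.span K
          (S.gen '' {p | p ∈ S.Pairs z ∧ S.meas z (lead p) ≤ N - 1}) ≤
          Submodule.span K
          (S.gen '' {p | p ∈ S.Pairs z ∧ S.meas z (lead p) ≤ N}) := by
        apply Submodule.span_mono
        apply Set.image_mono
        intro p' hp'
        refine ⟨hp'.1, ?_⟩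
        have := hp'.2
        omega
      have : q - r = (coeff ν q) • S.gen p + (q' - r) := by rw [hq']; ring
      rw [this]
      exact Submodule.add_mem _ hgenmem (hmono hr1)
  · push_neg at hJ
    exact ⟨q, by simp, hqhom, hJ⟩

/-- the reduction property at level `z` -/
def Red (z : ℕ) : Prop :=
  ∀ p1 p2 : Exp n × Exp n, p1 ∈ S.Pairs z → p2 ∈ S.Pairs z → lead p1 = lead p2 →
    S.gen p1 - S.gen p2 ∈ Submodule.span K
      (S.gen '' {p | p ∈ S.Pairs z ∧ S.gt (lead p1) (lead p)})

/-- the standard-vanishing property at level `z` -/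
def Van (z : ℕ) : Prop :=
  ∀ q ∈ S.SpanExp z, S.Std q → q = 0

/-- given vanishing of standard elements at level `z`, S-pairs reduce. -/
lemma red_of_van {z : ℕ} (hz : S.m ≤ z) (hvan : S.Van z) : S.Red z := by
  classical
  intro p1 p2 hp1 hp2 hlead12
  by_cases hpp : p1 = p2
  · subst hpp; simp
  set μ := lead p1 with hμ
  have hμdeg : μ.degree = z := S.lead_degree hp1
  set v := S.gen p1 - S.gen p2 with hv
  have hvhom : v.IsHomogeneous z := by
    intro d hd
    show (Finsupp.weight (fun _ => (1:ℕ))) d = z; rw [← Finsupp.degree_eq_weight_one]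
    have hd' : d ∈ v.support := MvPolynomial.mem_support_iff.2 hd
    rw [hv] at hd'
    have h1 := MvPolynomial.support_sub _ _ _ hd'
    rcases Finset.mem_union.1 h1 with h | h
    · exact S.degree_of_mem_support_gen hp1 h
    · exact S.degree_of_mem_support_gen hp2 h
  have hvgt : ∀ d ∈ v.support, S.gt μ d := by
    intro d hd
    have hcμ : coeff μ v = 0 := by
      have c1 : coeff μ (S.gen p1) = 1 := by rw [hμ]; exact S.coeff_gen_lead hp1.1
      have hl12 : lead p1 = lead p2 := hlead12
      have c2 : coeff μ (S.gen p2) = 1 := by rw [hμ, hl12]; exact S.coeff_gen_lead hp2.1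
      rw [hv, MvPolynomial.coeff_sub, c1, c2, sub_self]
    have hdμ : d ≠ μ := by
      intro he
      rw [he, MvPolynomial.mem_support_iff] at hd
      exact hd hcμ
    rw [hv] at hd
    have h1 := MvPolynomial.support_sub _ _ _ hd
    rcases Finset.mem_union.1 h1 with h | h
    · rcases S.gt_lead_of_mem_support hp1.1 h with h' | h'
      · exact absurd h' hdμ
      · exact h'
    · rcases S.gt_lead_of_mem_support hp2.1 h with h' | h'
      · rw [← hlead12] at h'; exact absurd h' hdμ
      · rw [← hlead12] at h'; exact h'
  -- all J-monomials of v have measure < meas μ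
  by_cases hN : ∃ d ∈ v.support, monomial d (1:K) ∈ S.J
  case neg =>
    -- v itself is standard, hence zero by hvan
    push_neg at hN
    have hvmem : v ∈ S.SpanExp z := by
      apply Submodule.sub_mem
      · exact Submodule.subset_span ⟨p1, hp1, rfl⟩
      · exact Submodule.subset_span ⟨p2, hp2, rfl⟩
    rw [show v = (0 : MvPolynomial (Fin (n+1)) K) from hvan v hvmem hN]
    exact Submodule.zero_mem _
  case pos =>
  have hμpos : 1 ≤ S.meas z μ := by
    obtain ⟨d, hd, hdJ⟩ := hN
    have h2 : d.degree = z := degree_eq_of_isHomogeneous hvhom hd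
    have := S.meas_lt (μ := μ) h2 (hvgt d hd)
    omega
  have hbound : ∀ d ∈ v.support, monomial d (1:K) ∈ S.J →
      S.meas z d ≤ S.meas z μ - 1 := by
    intro d hd _
    have h2 : d.degree = z := degree_eq_of_isHomogeneous hvhom hd
    have := S.meas_lt (μ := μ) h2 (hvgt d hd)
    omega
  obtain ⟨r, hr1, hr2, hr3⟩ := S.div_aux hz (S.meas z μ - 1) v hvhom hbound
  -- r is standard and lies in SpanExp z, hence r = 0
  have hrmem : r ∈ S.SpanExp z := by
    have hvmem : v ∈ S.SpanExp z := by
      apply Submodule.sub_mem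
      · exact Submodule.subset_span ⟨p1, hp1, rfl⟩
      · exact Submodule.subset_span ⟨p2, hp2, rfl⟩
    have hsub : Submodule.span K
        (S.gen '' {p | p ∈ S.Pairs z ∧ S.meas z (lead p) ≤ S.meas z μ - 1}) ≤
        S.SpanExp z := by
      apply Submodule.span_mono
      apply Set.image_mono
      exact fun p' hp' => hp'.1
    have : r = v - (v - r) := by ring
    rw [this]
    exact Submodule.sub_mem _ hvmem (hsub hr1)
  have hr0 : r = 0 := hvan r hrmem hr3
  rw [hr0, sub_zero] at hr1
  -- finally, small measure means gt μ lead
  have hfinal : Submodule.span K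
      (S.gen '' {p | p ∈ S.Pairs z ∧ S.meas z (lead p) ≤ S.meas z μ - 1}) ≤
      Submodule.span K (S.gen '' {p | p ∈ S.Pairs z ∧ S.gt μ (lead p)}) := by
    apply Submodule.span_mono
    apply Set.image_mono
    intro p' hp'
    refine ⟨hp'.1, ?_⟩
    have hld : (lead p').degree = z := S.lead_degree hp'.1
    have hne : lead p' ≠ μ := by
      intro he
      have := hp'.2
      rw [he] at this
      omega
    rcases S.gt_total hne with h | h
    · exfalso
      have := S.meas_lt hμdeg h
      have := hp'.2
      omega
    · exact h
  exact hfinal hr1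


/-- **Buchberger-style argument**: if S-pairs reduce at level `z`, then standard
elements of `SpanExp z` vanish. -/
lemma van_of_red {z : ℕ} (hz : S.m ≤ z) (hred : S.Red z) : S.Van z := by
  classical
  have master : ∀ (N T : ℕ) (l : (Exp n × Exp n) →₀ K), ↑l.support ⊆ S.Pairs z →
      (∀ p ∈ l.support, S.meas z (lead p) ≤ N) →
      (l.support.filter (fun p => S.meas z (lead p) = N)).card ≤ T →
      S.Std (Finsupp.linearCombination K S.gen l) →
      Finsupp.linearCombination K S.gen l = 0 := by
    intro N
    induction N using Nat.strong_induction_on with | _ N IHN =>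
    have descend : ∀ (l : (Exp n × Exp n) →₀ K), ↑l.support ⊆ S.Pairs z →
        (∀ p ∈ l.support, S.meas z (lead p) ≤ N) →
        (l.support.filter (fun p => S.meas z (lead p) = N)) = ∅ →
        S.Std (Finsupp.linearCombination K S.gen l) →
        Finsupp.linearCombination K S.gen l = 0 := by
      intro l hsupp hbound hfil hstd
      rcases Finset.eq_empty_or_nonempty l.support with he | hne
      · rw [Finsupp.support_eq_empty.1 he]; simp
      · have hnotN : ∀ p ∈ l.support, S.meas z (lead p) ≠ N := by
          intro p hp hpe
          have : p ∈ l.support.filter (fun p => S.meas z (lead p) = N) :=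
            Finset.mem_filter.2 ⟨hp, hpe⟩
          rw [hfil] at this
          simp at this
        have hN : N ≠ 0 := by
          obtain ⟨p, hp⟩ := hne
          have h1 := hbound p hp
          have h2 := hnotN p hp
          omega
        refine IHN (N-1) (by omega)
          ((l.support.filter (fun p => S.meas z (lead p) = N-1)).card) l hsupp ?_
          (le_refl _) hstd
        intro p hp
        have h1 := hbound p hp
        have h2 := hnotN p hp
        omega
    intro T
    induction T with
    | zero =>
      intro l hsupp hbound hcard hstd
      exact descend l hsupp hbound (Finset.card_eq_zero.1 (Nat.le_antisymm hcard (Nat.zero_le _))) hstd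
    | succ T IHT =>
      intro l hsupp hbound hcard hstd
      rcases Finset.eq_empty_or_nonempty
          (l.support.filter (fun p => S.meas z (lead p) = N)) with hfe | hfne
      · exact descend l hsupp hbound hfe hstd
      obtain ⟨p0, hp0⟩ := hfne
      rw [Finset.mem_filter] at hp0
      set μ := lead p0 with hμdef
      have hμmeas : S.meas z μ = N := hp0.2
      have hμdeg : μ.degree = z := S.lead_degree (hsupp (Finset.mem_coe.2 hp0.1))
      have hallμ : ∀ p ∈ l.support, S.meas z (lead p) = N → lead p = μ := by
        intro p hp hpe
        by_contra hne
        exact S.meas_inj (S.lead_degree (hsupp (Finset.mem_coe.2 hp))) hμdeg hne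
          (by omega)
      have hgtother : ∀ p ∈ l.support, S.meas z (lead p) ≠ N → S.gt μ (lead p) := by
        intro p hp hpe
        have h1 := hbound p hp
        have hne : lead p ≠ μ := fun he => hpe (by rw [he]; exact hμmeas)
        rcases S.gt_total hne with h | h
        · exfalso
          have := S.meas_lt hμdeg h
          omega
        · exact h
      have hμJ : monomial μ (1:K) ∈ S.J :=
        S.lead_mem_J (hsupp (Finset.mem_coe.2 hp0.1)).1
      have hc0 : coeff μ (Finsupp.linearCombination K S.gen l) = 0 := by
        by_contra hc
        exact hstd μ (MvPolynomial.mem_support_iff.2 hc) hμJ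
      have hcoeffμ : coeff μ (Finsupp.linearCombination K S.gen l) =
          ∑ p ∈ l.support.filter (fun p => S.meas z (lead p) = N), l p := by
        rw [Finsupp.linearCombination_apply, Finsupp.sum, MvPolynomial.coeff_sum]
        rw [← Finset.sum_filter_add_sum_filter_not l.support
          (fun p => S.meas z (lead p) = N)]
        have hz2 : ∀ p ∈ l.support.filter (fun p => ¬ S.meas z (lead p) = N),
            coeff μ (l p • S.gen p) = 0 := by
          intro p hp
          rw [Finset.mem_filter] at hp
          rw [MvPolynomial.coeff_smul,
            S.coeff_gen_zero_of_gt (hsupp (Finset.mem_coe.2 hp.1)).1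
              (hgtother p hp.1 hp.2), smul_zero]
        rw [Finset.sum_eq_zero hz2, add_zero]
        apply Finset.sum_congr rfl
        intro p hp
        rw [Finset.mem_filter] at hp
        rw [MvPolynomial.coeff_smul, ← hallμ p hp.1 hp.2, S.coeff_gen_lead
          (hsupp (Finset.mem_coe.2 hp.1)).1, smul_eq_mul, mul_one]
      have hsum0 : ∑ p ∈ l.support.filter (fun p => S.meas z (lead p) = N), l p = 0 := by
        rw [← hcoeffμ]; exact hc0
      -- the filter set has at least two elements
      have hp0mem : p0 ∈ l.support.filter (fun p => S.meas z (lead p) = N) :=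
        Finset.mem_filter.2 ⟨hp0.1, show S.meas z (lead p0) = N from hp0.2⟩
      have hcard2 : 1 < (l.support.filter (fun p => S.meas z (lead p) = N)).card := by
        rcases Nat.lt_or_ge 1 (l.support.filter (fun p => S.meas z (lead p) = N)).card
          with h | h
        · exact h
        · exfalso
          have hpos := Finset.card_pos.2 ⟨p0, hp0mem⟩
          have hc1 : (l.support.filter (fun p => S.meas z (lead p) = N)).card = 1 := by
            omega
          rw [Finset.card_eq_one] at hc1
          obtain ⟨a, ha⟩ := hc1
          have hap0 : a = p0 := by
            have := hp0mem
            rw [ha, Finset.mem_singleton] at this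
            exact this.symm
          rw [ha, hap0, Finset.sum_singleton] at hsum0
          exact Finsupp.mem_support_iff.1 hp0.1 hsum0
      obtain ⟨p1, hp1f, p2, hp2f, hp12⟩ := Finset.one_lt_card.1 hcard2
      rw [Finset.mem_filter] at hp1f hp2f
      have hl1 : lead p1 = μ := hallμ p1 hp1f.1 hp1f.2
      have hl2 : lead p2 = μ := hallμ p2 hp2f.1 hp2f.2
      have hP1 : p1 ∈ S.Pairs z := hsupp (Finset.mem_coe.2 hp1f.1)
      have hP2 : p2 ∈ S.Pairs z := hsupp (Finset.mem_coe.2 hp2f.1)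
      have hredv := hred p1 p2 hP1 hP2 (by rw [hl1, hl2])
      rw [hl1] at hredv
      obtain ⟨lv, hlvsupp, hlvcomb⟩ :=
        (Finsupp.mem_span_image_iff_linearCombination K).1 hredv
      rw [Finsupp.mem_supported] at hlvsupp
      have hlvp1 : lv p1 = 0 := by
        by_contra hc
        have := hlvsupp (Finset.mem_coe.2 (Finsupp.mem_support_iff.2 hc))
        exact S.gt_irrefl μ (hl1 ▸ this.2)
      set l' := l + (l p1) • lv + Finsupp.single p2 (l p1) - Finsupp.single p1 (l p1)
        with hl'def
      have hcomb' : Finsupp.linearCombination K S.gen l' =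
          Finsupp.linearCombination K S.gen l := by
        rw [hl'def, map_sub, map_add, map_add, map_smul,
          Finsupp.linearCombination_single, Finsupp.linearCombination_single, hlvcomb]
        rw [smul_sub]
        abel
      have hl'p1 : l' p1 = 0 := by
        rw [hl'def]
        rw [Finsupp.sub_apply, Finsupp.add_apply, Finsupp.add_apply, Finsupp.smul_apply,
          hlvp1, Finsupp.single_eq_of_ne' (Ne.symm hp12), Finsupp.single_eq_same]
        simp
      have hsuppl' : ∀ p ∈ l'.support, p ∈ l.support ∨ p ∈ lv.support ∨ p = p2 := by
        intro p hp
        by_contra hcon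
        push_neg at hcon
        obtain ⟨h1, h2, h3⟩ := hcon
        have hpp1 : p ≠ p1 := by
          intro he
          rw [he] at h1
          exact h1 hp1f.1
        apply Finsupp.mem_support_iff.1 hp
        rw [hl'def, Finsupp.sub_apply, Finsupp.add_apply, Finsupp.add_apply,
          Finsupp.smul_apply, Finsupp.notMem_support_iff.1 h1,
          Finsupp.notMem_support_iff.1 h2, Finsupp.single_eq_of_ne' (Ne.symm h3),
          Finsupp.single_eq_of_ne' (Ne.symm hpp1)]
        simp
      have hsupp' : ↑l'.support ⊆ S.Pairs z := by
        intro p hp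
        rcases hsuppl' p hp with h | h | h
        · exact hsupp (Finset.mem_coe.2 h)
        · exact (hlvsupp (Finset.mem_coe.2 h)).1
        · rw [h]; exact hP2
      have hbound' : ∀ p ∈ l'.support, S.meas z (lead p) ≤ N := by
        intro p hp
        rcases hsuppl' p hp with h | h | h
        · exact hbound p h
        · have hgt := (hlvsupp (Finset.mem_coe.2 h)).2
          have := S.meas_lt (S.lead_degree (hlvsupp (Finset.mem_coe.2 h)).1) hgt
          omega
        · rw [h]; exact hbound p2 hp2f.1
      have hcard' : (l'.support.filter (fun p => S.meas z (lead p) = N)).card ≤ T := by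
        have hsubset : l'.support.filter (fun p => S.meas z (lead p) = N) ⊆
            (l.support.filter (fun p => S.meas z (lead p) = N)).erase p1 := by
          intro p hp
          rw [Finset.mem_filter] at hp
          rw [Finset.mem_erase, Finset.mem_filter]
          have hpp1 : p ≠ p1 := by
            intro he
            rw [he] at hp
            exact Finsupp.mem_support_iff.1 hp.1 hl'p1
          refine ⟨hpp1, ?_, hp.2⟩
          rcases hsuppl' p hp.1 with h | h | h
          · exact h
          · exfalso
            have hgt := (hlvsupp (Finset.mem_coe.2 h)).2
            have := S.meas_lt (S.lead_degree (hlvsupp (Finset.mem_coe.2 h)).1) hgt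
            omega
          · rw [h]; exact hp2f.1
        calc (l'.support.filter (fun p => S.meas z (lead p) = N)).card
            ≤ ((l.support.filter (fun p => S.meas z (lead p) = N)).erase p1).card :=
              Finset.card_le_card hsubset
          _ = (l.support.filter (fun p => S.meas z (lead p) = N)).card - 1 :=
              Finset.card_erase_of_mem (Finset.mem_filter.2 ⟨hp1f.1, hp1f.2⟩)
          _ ≤ T := by omega
      have hstd' : S.Std (Finsupp.linearCombination K S.gen l') := by
        rw [hcomb']; exact hstd
      have := IHT l' hsupp' hbound' hcard' hstd'
      rw [hcomb'] at this
      exact this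
  intro q hq hstd
  have hq' : q ∈ Submodule.span K (S.gen '' S.Pairs z) := hq
  obtain ⟨l, hl, rfl⟩ := (Finsupp.mem_span_image_iff_linearCombination K).1 hq'
  rw [Finsupp.mem_supported] at hl
  exact master (l.support.sup (fun p => S.meas z (lead p)))
    ((l.support.filter (fun p => S.meas z (lead p) =
      l.support.sup (fun p => S.meas z (lead p)))).card) l hl
    (fun p hp => Finset.le_sup (f := fun p => S.meas z (lead p)) hp) (le_refl _) hstd


lemma gen_mul_single {A E : Exp n} (l : Fin (n+1)) :
    monomial (Finsupp.single l 1) (1:K) * S.gen (A, E) =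
      S.gen (A, Finsupp.single l 1 + E) := by
  unfold gen
  rw [← mul_assoc, monomial_mul, one_mul]

/-- chain step when the `E`-parts share a variable. -/
lemma red_step_common {z : ℕ} (hred : S.Red z)
    {p1 p2 : Exp n × Exp n} (hp1 : p1 ∈ S.Pairs (z+1)) (hp2 : p2 ∈ S.Pairs (z+1))
    (hlead12 : lead p1 = lead p2) {l : Fin (n+1)} (h1 : p1.2 l ≠ 0) (h2 : p2.2 l ≠ 0) :
    S.gen p1 - S.gen p2 ∈ Submodule.span K
      (S.gen '' {p | p ∈ S.Pairs (z+1) ∧ S.gt (lead p1) (lead p)}) := by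
  classical
  set q1 : Exp n × Exp n := (p1.1, p1.2 - Finsupp.single l 1) with hq1def
  set q2 : Exp n × Exp n := (p2.1, p2.2 - Finsupp.single l 1) with hq2def
  have he1 : (p1.2 - Finsupp.single l 1) + Finsupp.single l 1 = p1.2 := sub_single_add h1
  have he2 : (p2.2 - Finsupp.single l 1) + Finsupp.single l 1 = p2.2 := sub_single_add h2
  have hq1P : q1 ∈ S.Pairs z := by
    refine ⟨hp1.1, ?_⟩
    have hd := congrArg Finsupp.degree he1
    rw [degree_add, degree_single] at hd
    have := hp1.2
    show (p1.2 - Finsupp.single l 1).degree + S.m = z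
    omega
  have hq2P : q2 ∈ S.Pairs z := by
    refine ⟨hp2.1, ?_⟩
    have hd := congrArg Finsupp.degree he2
    rw [degree_add, degree_single] at hd
    have := hp2.2
    show (p2.2 - Finsupp.single l 1).degree + S.m = z
    omega
  have hlq1 : lead q1 + Finsupp.single l 1 = lead p1 := by
    show (p1.1 + (p1.2 - Finsupp.single l 1)) + Finsupp.single l 1 = p1.1 + p1.2
    rw [add_assoc, he1]
  have hlq2 : lead q2 + Finsupp.single l 1 = lead p2 := by
    show (p2.1 + (p2.2 - Finsupp.single l 1)) + Finsupp.single l 1 = p2.1 + p2.2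
    rw [add_assoc, he2]
  have hleadq : lead q1 = lead q2 := by
    apply add_right_cancel (b := Finsupp.single l 1)
    rw [hlq1, hlq2, hlead12]
  have hv := hred q1 q2 hq1P hq2P hleadq
  have hgen1 : monomial (Finsupp.single l 1) (1:K) * S.gen q1 = S.gen p1 := by
    rw [hq1def, S.gen_mul_single l]
    have e : Finsupp.single l 1 + (p1.2 - Finsupp.single l 1) = p1.2 := by
      rw [add_comm]; exact he1
    rw [e]
  have hgen2 : monomial (Finsupp.single l 1) (1:K) * S.gen q2 = S.gen p2 := by
    rw [hq2def, S.gen_mul_single l]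
    have e : Finsupp.single l 1 + (p2.2 - Finsupp.single l 1) = p2.2 := by
      rw [add_comm]; exact he2
    rw [e]
  have hmem : S.gen p1 - S.gen p2 ∈ Submodule.map
      (LinearMap.mulLeft K (monomial (Finsupp.single l 1) (1:K)))
      (Submodule.span K (S.gen '' {p | p ∈ S.Pairs z ∧ S.gt (lead q1) (lead p)})) := by
    refine ⟨S.gen q1 - S.gen q2, hv, ?_⟩
    rw [LinearMap.mulLeft_apply, mul_sub, hgen1, hgen2]
  rw [Submodule.map_span] at hmem
  refine Submodule.span_mono ?_ hmem
  rintro x ⟨y, ⟨p, hp, rfl⟩, rfl⟩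
  refine ⟨(p.1, Finsupp.single l 1 + p.2), ⟨⟨hp.1.1, ?_⟩, ?_⟩, ?_⟩
  · show (Finsupp.single l 1 + p.2).degree + S.m = z + 1
    rw [degree_add, degree_single]
    have := hp.1.2
    omega
  · show S.gt (lead p1) (lead (p.1, Finsupp.single l 1 + p.2))
    have hl : lead (p.1, Finsupp.single l 1 + p.2) = lead p + Finsupp.single l 1 := by
      show p.1 + (Finsupp.single l 1 + p.2) = (p.1 + p.2) + Finsupp.single l 1
      rw [add_comm (Finsupp.single l 1) p.2, add_assoc]
    rw [hl, ← hlq1]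
    exact S.gt_add _ hp.2
  · show S.gen (p.1, Finsupp.single l 1 + p.2) =
        LinearMap.mulLeft K (monomial (Finsupp.single l 1) (1:K)) (S.gen (p.1, p.2))
    rw [LinearMap.mulLeft_apply, S.gen_mul_single l]


lemma eq_single_of_support {E : Exp n} {a : Fin (n+1)} (h : ∀ j, j ≠ a → E j = 0) :
    E = Finsupp.single a (E a) := by
  ext j
  rcases eq_or_ne j a with rfl | hj
  · rw [Finsupp.single_eq_same]
  · rw [Finsupp.single_eq_of_ne' (Ne.symm hj)]
    exact h j hj

/-- chain step in the disjoint case, ordered so the Borel exchange applies. -/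
lemma red_step_ordered {z : ℕ} (hz : S.m + 1 ≤ z) (hred : S.Red z)
    {p1 p2 : Exp n × Exp n} (hp1 : p1 ∈ S.Pairs (z+1)) (hp2 : p2 ∈ S.Pairs (z+1))
    (hlead12 : lead p1 = lead p2) {a b : Fin (n+1)} (hab : a ≤ b)
    (ha : p1.2 a ≠ 0) (hb : p2.2 b ≠ 0) (hE1b : p1.2 b = 0) :
    S.gen p1 - S.gen p2 ∈ Submodule.span K
      (S.gen '' {p | p ∈ S.Pairs (z+1) ∧ S.gt (lead p1) (lead p)}) := by
  classical
  have hanb : a ≠ b := fun e => ha (e ▸ hE1b)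
  have hA1b : p1.1 b ≠ 0 := by
    have hcoord := congrArg (fun f : Exp n => f b) hlead12
    simp only [lead, Finsupp.coe_add, Pi.add_apply] at hcoord
    omega
  have hE1deg : p1.2.degree + S.m = z + 1 := hp1.2
  have hA1deg : p1.1.degree = S.m := ((S.hF _).1 hp1.1).1
  -- the exchanged generator exponent
  set A3 : Exp n := (p1.1 - Finsupp.single b 1) + Finsupp.single a 1 with hA3def
  have hA1dec : (p1.1 - Finsupp.single b 1) + Finsupp.single b 1 = p1.1 :=
    sub_single_add hA1b
  have hA3J : monomial A3 (1:K) ∈ S.J := by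
    apply S.borel_move hab
    rw [hA1dec]
    exact ((S.hF _).1 hp1.1).2
  have hA3deg : A3.degree = S.m := by
    have hd := congrArg Finsupp.degree hA1dec
    rw [degree_add, degree_single] at hd
    rw [hA3def, degree_add, degree_single]
    omega
  have hA3F : A3 ∈ S.F := (S.hF _).2 ⟨hA3deg, hA3J⟩
  set E3 : Exp n := (p1.2 - Finsupp.single a 1) + Finsupp.single b 1 with hE3def
  have hE1dec : (p1.2 - Finsupp.single a 1) + Finsupp.single a 1 = p1.2 :=
    sub_single_add ha
  have hE3deg : E3.degree = p1.2.degree := by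
    have hd := congrArg Finsupp.degree hE1dec
    rw [degree_add, degree_single] at hd
    rw [hE3def, degree_add, degree_single]
    omega
  set p3 : Exp n × Exp n := (A3, E3) with hp3def
  have hp3P : p3 ∈ S.Pairs (z+1) := by
    refine ⟨hA3F, ?_⟩
    show E3.degree + S.m = z + 1
    rw [hE3deg]
    exact hE1deg
  have happ : ∀ (x : Exp n) (i j k : Fin (n+1)),
      (((x - Finsupp.single i 1) + Finsupp.single j 1 : Exp n) k)
        = x k - (if i = k then 1 else 0) + (if j = k then 1 else 0) := by
    intro x i j k
    rw [Finsupp.add_apply, Finsupp.tsub_apply, Finsupp.single_apply, Finsupp.single_apply]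
  have h1 : 1 ≤ p1.1 b := Nat.one_le_iff_ne_zero.2 hA1b
  have h2 : 1 ≤ p1.2 a := Nat.one_le_iff_ne_zero.2 ha
  have hlead3 : lead p3 = lead p1 := by
    show A3 + E3 = p1.1 + p1.2
    rw [hA3def, hE3def]
    ext j
    rw [Finsupp.add_apply (g₁ := (p1.1 - Finsupp.single b 1) + Finsupp.single a 1), happ, happ,
      Finsupp.add_apply]
    rcases eq_or_ne a j with rfl | haj
    · rw [if_pos rfl, if_neg (Ne.symm hanb)]
      omega
    · rcases eq_or_ne b j with rfl | hbj
      · rw [if_pos rfl, if_neg hanb]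
        omega
      · rw [if_neg haj, if_neg hbj]
        omega
  have hE3b : E3 b ≠ 0 := by
    rw [hE3def, happ, if_pos rfl, if_neg hanb]
    omega
  obtain ⟨l, hl1, hl3⟩ : ∃ l, p1.2 l ≠ 0 ∧ E3 l ≠ 0 := by
    by_cases h2a : 2 ≤ p1.2 a
    · refine ⟨a, ha, ?_⟩
      rw [hE3def, happ, if_pos rfl, if_neg (Ne.symm hanb)]
      omega
    · have h1a : p1.2 a = 1 := by omega
      obtain ⟨l, hla, hl⟩ : ∃ l, l ≠ a ∧ p1.2 l ≠ 0 := by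
        by_contra hcon
        push_neg at hcon
        have hsing := eq_single_of_support (E := p1.2) (a := a) (fun j hj => hcon j hj)
        rw [hsing, h1a, degree_single] at hE1deg
        omega
      have hlb : l ≠ b := by
        intro he
        rw [he] at hl
        exact hl hE1b
      refine ⟨l, hl, ?_⟩
      rw [hE3def, happ, if_neg (Ne.symm hla), if_neg (Ne.symm hlb)]
      omega
  have s1 := S.red_step_common hred hp1 hp3P hlead3.symm hl1 hl3
  have s2 := S.red_step_common hred hp3P hp2 (hlead3.trans hlead12) hE3b hb
  rw [hlead3] at s2
  have : S.gen p1 - S.gen p2 = (S.gen p1 - S.gen p3) + (S.gen p3 - S.gen p2) := by ring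
  rw [this]
  exact Submodule.add_mem _ s1 s2

/-- the chain lemma: reduction propagates to the next degree. -/
lemma red_succ {z : ℕ} (hz : S.m + 1 ≤ z) (hred : S.Red z) : S.Red (z+1) := by
  classical
  intro p1 p2 hp1 hp2 hlead12
  by_cases hpp : p1 = p2
  · subst hpp
    rw [sub_self]
    exact Submodule.zero_mem _
  by_cases hcom : ∃ l, p1.2 l ≠ 0 ∧ p2.2 l ≠ 0
  · obtain ⟨l, h1, h2⟩ := hcom
    exact S.red_step_common hred hp1 hp2 hlead12 h1 h2
  · push_neg at hcom
    have hz0 : (0 : Exp n).degree = 0 := (Finsupp.degree_eq_zero_iff (0 : Exp n)).2 rfl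
    have hE1ne : p1.2 ≠ 0 := by
      intro he
      have h := hp1.2
      rw [he, hz0] at h
      omega
    have hE2ne : p2.2 ≠ 0 := by
      intro he
      have h := hp2.2
      rw [he, hz0] at h
      omega
    obtain ⟨a, ha⟩ : ∃ a, p1.2 a ≠ 0 := by
      by_contra hcon
      push_neg at hcon
      exact hE1ne (Finsupp.ext fun j => hcon j)
    obtain ⟨b, hb⟩ : ∃ b, p2.2 b ≠ 0 := by
      by_contra hcon
      push_neg at hcon
      exact hE2ne (Finsupp.ext fun j => hcon j)
    have hE1b : p1.2 b = 0 := by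
      by_contra hcon
      exact hb (hcom b hcon)
    have hanb : a ≠ b := fun e => ha (e ▸ hE1b)
    rcases lt_or_gt_of_ne hanb with hab | hba
    · exact S.red_step_ordered hz hred hp1 hp2 hlead12 (le_of_lt hab) ha hb hE1b
    · have hE2a : p2.2 a = 0 := hcom a ha
      have hsw := S.red_step_ordered hz hred hp2 hp1 hlead12.symm (le_of_lt hba) hb ha hE2a
      rw [← hlead12] at hsw
      have := Submodule.neg_mem _ hsw
      rwa [neg_sub] at this


/-- at the generation degree, reduction is trivial. -/
lemma red_base : S.Red S.m := by
  intro p1 p2 hp1 hp2 hlead12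
  have hE1 : p1.2 = 0 := by
    have h := hp1.2
    have : p1.2.degree = 0 := by omega
    exact (Finsupp.degree_eq_zero_iff _).1 this
  have hE2 : p2.2 = 0 := by
    have h := hp2.2
    have : p2.2.degree = 0 := by omega
    exact (Finsupp.degree_eq_zero_iff _).1 this
  have : p1 = p2 := by
    have h1 : p1.1 = p2.1 := by
      have := hlead12
      rw [lead, lead, hE1, hE2, add_zero, add_zero] at this
      exact this
    exact Prod.ext h1 (by rw [hE1, hE2])
  rw [this, sub_self]
  exact Submodule.zero_mem _

/-- vanishing propagates from degree `m+1` to all degrees `≥ m`. -/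
lemma van_all (hvm1 : S.Van (S.m + 1)) : ∀ z, S.m ≤ z → S.Van z := by
  have hred : ∀ z, S.m + 1 ≤ z → S.Red z := by
    intro z hz
    induction z, hz using Nat.le_induction with
    | base => exact S.red_of_van (by omega) hvm1
    | succ z hz ih => exact S.red_succ hz ih
  intro z hz
  rcases Nat.eq_or_lt_of_le hz with he | hlt
  · rw [← he]
    exact S.van_of_red (le_refl _) S.red_base
  · exact S.van_of_red (by omega) (hred z hlt)

/-- if the dimension in degree `m+1` is not bigger than that of `J`, standard
elements of degree `m+1` vanish. -/
lemma van_m1_of_dim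
    (hdim : Module.finrank K ↥(S.SpanExp (S.m+1)) = (S.FJ (S.m+1)).card) :
    S.Van (S.m + 1) := by
  classical
  intro q hq hstd
  by_contra hqne
  -- build a linearly independent family of size card + 1
  have hch : ∀ ν : ↥(S.FJ (S.m+1)), ∃ A, A ∈ S.F ∧ A ≤ (ν : Exp n) := by
    intro ν
    have h := S.mem_FJ.1 ν.2
    obtain ⟨A, hA1, hA2⟩ := S.exists_F_le h.2 (by omega)
    exact ⟨A, hA1, hA2⟩
  choose Af hAf1 hAf2 using hch
  have hqhom : q.IsHomogeneous (S.m+1) :=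
    (mem_homogeneousSubmodule _ _).1 (S.spanExp_le_homog _ hq)
  -- the top monomial of q
  have hqsupp : q.support.Nonempty := by
    rw [Finset.nonempty_iff_ne_empty]
    intro he
    exact hqne (MvPolynomial.support_eq_empty.1 he)
  obtain ⟨νq, hνqsupp, hνqmax⟩ := Finset.exists_max_image q.support
    (S.meas (S.m+1)) hqsupp
  have hνqdeg : νq.degree = S.m + 1 := degree_eq_of_isHomogeneous hqhom hνqsupp
  have hνqnJ : monomial νq (1:K) ∉ S.J := hstd νq hνqsupp
  have hνqF : νq ∉ S.FJ (S.m+1) := fun h => hνqnJ (S.mem_FJ.1 h).2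
  set s : Finset (Exp n) := insert νq (S.FJ (S.m+1)) with hs
  set w : Exp n → MvPolynomial (Fin (n+1)) K := fun ν =>
    if hν : ν ∈ S.FJ (S.m+1) then S.gen (Af ⟨ν, hν⟩, ν - Af ⟨ν, hν⟩)
    else q with hw
  have hlead : ∀ (ν : Exp n) (hν : ν ∈ S.FJ (S.m+1)),
      lead (Af ⟨ν, hν⟩, ν - Af ⟨ν, hν⟩) = ν := by
    intro ν hν
    exact add_tsub_cancel_of_le (hAf2 ⟨ν, hν⟩)
  have hpair : ∀ (ν : Exp n) (hν : ν ∈ S.FJ (S.m+1)),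
      ((Af ⟨ν, hν⟩, ν - Af ⟨ν, hν⟩) : Exp n × Exp n) ∈ S.Pairs (S.m+1) := by
    intro ν hν
    refine ⟨hAf1 ⟨ν, hν⟩, ?_⟩
    have h1 : Af ⟨ν, hν⟩ + (ν - Af ⟨ν, hν⟩) = ν := hlead ν hν
    have h4 := congrArg Finsupp.degree h1
    rw [degree_add] at h4
    have h2 : (Af ⟨ν, hν⟩).degree = S.m := ((S.hF _).1 (hAf1 ⟨ν, hν⟩)).1
    have h3 : ν.degree = S.m+1 := (S.mem_FJ.1 hν).1
    show (ν - Af ⟨ν, hν⟩).degree + S.m = S.m+1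
    omega
  have hli : LinearIndependent K (fun d : ↥s => w (d : Exp n)) := by
    apply S.triangular_li (z := S.m+1)
    · intro d hd
      rw [hs, Finset.mem_insert] at hd
      rcases hd with rfl | hd
      · rw [hw]; simp only [dif_neg hνqF]
        exact MvPolynomial.mem_support_iff.1 hνqsupp
      · rw [hw]; simp only [dif_pos hd]
        have := S.coeff_gen_lead (p := (Af ⟨d, hd⟩, d - Af ⟨d, hd⟩)) (hAf1 _)
        rw [hlead d hd] at this
        rw [this]; exact one_ne_zero
    · intro d hd e he
      rw [hs, Finset.mem_insert] at hd
      rcases hd with rfl | hd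
      · rw [hw] at he; simp only [dif_neg hνqF] at he
        -- e ∈ q.support; νq is the meas-max
        rcases eq_or_ne e d with he' | hne
        · exact Or.inl he'
        · right
          rcases S.gt_total hne with h | h
          · exfalso
            have hedeg : e.degree = S.m+1 := degree_eq_of_isHomogeneous hqhom he
            have := S.meas_lt (μ := e) (ν := d) hνqdeg h
            have h2 := hνqmax e he
            omega
          · exact h
      · rw [hw] at he; simp only [dif_pos hd] at he
        have := S.gt_lead_of_mem_support (p := (Af ⟨d, hd⟩, d - Af ⟨d, hd⟩)) (hAf1 _) he
        rwa [hlead d hd] at this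
    · intro d hd
      rw [hs, Finset.mem_insert] at hd
      rcases hd with rfl | hd
      · exact hνqdeg
      · exact (S.mem_FJ.1 hd).1
  have hrange : Submodule.span K (Set.range (fun d : ↥s => w (d : Exp n)))
      ≤ S.SpanExp (S.m+1) := by
    rw [Submodule.span_le]
    rintro g ⟨d, rfl⟩
    have hd : (d : Exp n) = νq ∨ (d : Exp n) ∈ S.FJ (S.m+1) :=
      Finset.mem_insert.1 (show (d : Exp n) ∈ insert νq (S.FJ (S.m+1)) from d.2)
    rcases eq_or_ne (d : Exp n) νq with he | hne
    · simp only [hw, he, dif_neg hνqF]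
      exact hq
    · have hdF : (d : Exp n) ∈ S.FJ (S.m+1) := by
        rcases hd with h | h
        · exact absurd h hne
        · exact h
      simp only [hw, dif_pos hdF]
      exact Submodule.subset_span ⟨_, hpair _ hdF, rfl⟩
  have hcard : Fintype.card ↥s = (S.FJ (S.m+1)).card + 1 := by
    rw [Fintype.card_coe, hs, Finset.card_insert_of_notMem hνqF]
  have hge : (S.FJ (S.m+1)).card + 1 ≤ Module.finrank K ↥(S.SpanExp (S.m+1)) := by
    calc (S.FJ (S.m+1)).card + 1 = Fintype.card ↥s := hcard.symm
      _ = Module.finrank K ↥(Submodule.span K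
            (Set.range (fun d : ↥s => w (d : Exp n)))) := (finrank_span_eq_card hli).symm
      _ ≤ Module.finrank K ↥(S.SpanExp (S.m+1)) := Submodule.finrank_mono hrange
  omega

/-- the main combinatorial theorem. -/
theorem main_dim (hdim : Module.finrank K ↥(S.SpanExp (S.m+1)) = (S.FJ (S.m+1)).card) :
    ∀ z, S.m ≤ z → Module.finrank K ↥(S.SpanExp z) = (S.FJ z).card := by
  intro z hz
  have hvan := S.van_all (S.van_m1_of_dim hdim) z hz
  exact Nat.le_antisymm (S.finrank_spanExp_le_card hvan) (S.card_le_finrank_spanExp hz)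

end Ctx
end LG


/-- **Local Gotzmann persistence.**  Let `J` be extremal with respect to the term
order `gt`, with `m` its largest minimal-generator degree, `F` the exponents of
the degree-`m` monomials of `J` and `R` the degree-`m` standard exponents.  Let
`V ⊆ S_m` be spanned by `f_A = x^A + ∑_{B ∈ R} c_{AB} x^B` (`A ∈ F`) — i.e.
`[V]` lies in the affine chart of `Grass(r, S_m)` centered at `[J_m]` — and let
`I = (V)`.  Then `dim I_{m+1} = dim J_{m+1}` iff `dim I_z = dim J_z` for all `z ≥ m`. -/
theorem local_gotzmann {n : ℕ} {K : Type*} [Field K] [CharZero K] [IsAlgClosed K]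
    (J : Ideal (MvPolynomial (Fin (n + 1)) K)) (hBorel : BorelFixed J)
    (gt : (Fin (n + 1) →₀ ℕ) → (Fin (n + 1) →₀ ℕ) → Prop) (hgt : IsTermOrder gt)
    (m : ℕ)
    (hm : ∀ A : Fin (n + 1) →₀ ℕ, MinGen J A → (A.sum fun _ e => e) ≤ m)
    (hm' : ∃ A : Fin (n + 1) →₀ ℕ, MinGen J A ∧ (A.sum fun _ e => e) = m)
    -- extremality: the degree-`m` monomials of `J` are the largest under `gt`
    (hext : ∀ A B : Fin (n + 1) →₀ ℕ,
      (A.sum fun _ e => e) = m → (B.sum fun _ e => e) = m →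
      MvPolynomial.monomial A (1 : K) ∈ J → MvPolynomial.monomial B (1 : K) ∉ J →
      gt A B)
    (F R : Finset (Fin (n + 1) →₀ ℕ))
    (hF : ∀ A, A ∈ F ↔ ((A.sum fun _ e => e) = m ∧ MvPolynomial.monomial A (1 : K) ∈ J))
    (hR : ∀ B, B ∈ R ↔ ((B.sum fun _ e => e) = m ∧ MvPolynomial.monomial B (1 : K) ∉ J))
    (c : (Fin (n + 1) →₀ ℕ) → (Fin (n + 1) →₀ ℕ) → K)
    (I : Ideal (MvPolynomial (Fin (n + 1)) K))
    (hI : I = Ideal.span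
      { f | ∃ A ∈ F, f = MvPolynomial.monomial A (1 : K) +
            ∑ B ∈ R, c A B • MvPolynomial.monomial B (1 : K) }) :
    hilb I (m + 1) = hilb J (m + 1) ↔ ∀ z, m ≤ z → hilb I z = hilb J z := by
    classical
  set S : LG.Ctx n K := ⟨J, gt, m, F, R, c, hBorel, hgt, hm, hext, hF, hR⟩ with hS
  have hIdl : I = S.Idl := by
    rw [hI]
    unfold LG.Ctx.Idl
    congr 1
    ext f
    constructor
    · rintro ⟨A, hA, rfl⟩
      exact ⟨A, hA, rfl⟩
    · rintro ⟨A, hA, rfl⟩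
      exact ⟨A, hA, rfl⟩
  have hilbI : ∀ z, hilb I z = Module.finrank K ↥(S.SpanExp z) := by
    intro z
    unfold hilb
    rw [hIdl, S.graded_piece_eq z]
  have hilbJ : ∀ z, hilb J z = (S.FJ z).card := by
    intro z
    exact S.finrank_J_graded z
  constructor
  · intro h1 z hz
    rw [hilbI z, hilbJ z]
    refine S.main_dim ?_ z hz
    show Module.finrank K ↥(S.SpanExp (m+1)) = (S.FJ (m+1)).card
    rw [← hilbI (m+1), ← hilbJ (m+1)]
    exact h1
  · intro h
    exact h (m+1) (by omega)
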